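/- For every positive integer l, the number of anonymous walk sequences of length l equals the l-th Bell number, i.e., the number of anonymous walk sequences of length l equals the number of partitions of a set with l elements (equivalently, the number of equivalence relations on Fin l). -/

import Mathlib

/-- An anonymous walk sequence of length `l`: a sequence `a 0, …, a l` of naturals with
`a 0 = 0`, `a (i+1) ≠ a i`, and `a (i+1) ≤ 1 + max (a 0, …, a i)`. -/
def IsAWS (l : ℕ) (a : Fin (l + 1) → ℕ) : Prop :=
  a 0 = 0 ∧
  (∀ i : Fin l, a i.succ ≠ a i.castSucc) ∧
  (∀ i : Fin l, a i.succ ≤ 1 + (Finset.Iic i.castSucc).sup a)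

namespace AWSBell

open Finset

def ext {n : ℕ} (b : Fin n → ℕ) : ℕ → ℕ := fun m => if h : m < n then b ⟨m, h⟩ else 0

lemma ext_lt {n : ℕ} (b : Fin n → ℕ) {m : ℕ} (h : m < n) : ext b m = b ⟨m, h⟩ := dif_pos h

lemma sup_range_succ (f : ℕ → ℕ) (n : ℕ) :
    (range (n+1)).sup f = f n ⊔ (range n).sup f := by
  rw [range_add_one, sup_insert]

def invA (b : ℕ → ℕ) : ℕ → ℕ
  | 0 => 0
  | n+1 => if b n < invA b n then b n else b n + 1

lemma invA_succ (b : ℕ → ℕ) (n : ℕ) :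
    invA b (n+1) = if b n < invA b n then b n else b n + 1 := rfl

lemma invA_succ_ne (b : ℕ → ℕ) (n : ℕ) : invA b (n+1) ≠ invA b n := by
  rw [invA_succ]; split <;> omega

lemma sup_invA (b : ℕ → ℕ) (n : ℕ) :
    (range (n+1)).sup (invA b) = (range n).sup (fun m => b m + 1) := by
  induction n with
  | zero => simp [invA]
  | succ n ih =>
    rw [sup_range_succ (invA b) (n+1), sup_range_succ (fun m => b m + 1) n, invA_succ, ih]
    split_ifs with h
    · have h1 : invA b n ≤ (range (n+1)).sup (invA b) :=
        le_sup (by simp : n ∈ range (n+1))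
      rw [ih] at h1
      have h2 : b n + 1 ≤ (range n).sup (fun m => b m + 1) := by omega
      rw [sup_eq_right.2 h2, sup_eq_right.2 (by omega : b n ≤ _)]
    · rfl

lemma invA_congr {b c : ℕ → ℕ} (n : ℕ) (h : ∀ m < n, b m = c m) : invA b n = invA c n := by
  induction n with
  | zero => rfl
  | succ n ih =>
    have ihn : invA b n = invA c n := ih (fun m hm => h m (by omega))
    rw [invA_succ, invA_succ, h n (by omega), ihn]

section Part2
open Finset
variable {l : ℕ}

def IsRGS (l : ℕ) (b : Fin l → ℕ) : Prop :=
  ∀ i : Fin l, b i ≤ (Finset.Iio i).sup (fun j => b j + 1)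

lemma sup_Iic (a : Fin (l+1) → ℕ) (i : Fin (l+1)) :
    (Finset.Iic i).sup a = (range (i.val+1)).sup (ext a) := by
  apply le_antisymm
  · refine Finset.sup_le fun j hj => ?_
    have hj'' : j ≤ i := Finset.mem_Iic.1 hj
    have hj' : j.val ≤ i.val := Fin.le_def.1 hj''
    have h1 : a j ≤ ext a j.val := by rw [ext_lt a j.isLt, Fin.eta]
    exact h1.trans (le_sup (mem_range.2 (by omega)))
  · refine Finset.sup_le fun m hm => ?_
    have hm' : m < i.val + 1 := mem_range.1 hm
    have hml : m < l + 1 := by omega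
    rw [ext_lt a hml]
    exact le_sup (Finset.mem_Iic.2 (Fin.le_def.2 (by simpa using by omega : (⟨m, hml⟩ : Fin (l+1)).val ≤ i.val)))

lemma sup_Iio (b : Fin l → ℕ) (i : Fin l) :
    (Finset.Iio i).sup (fun j => b j + 1) = (range i.val).sup (fun m => ext b m + 1) := by
  apply le_antisymm
  · refine Finset.sup_le fun j hj => ?_
    have hj'' : j < i := Finset.mem_Iio.1 hj
    have hj' : j.val < i.val := Fin.lt_def.1 hj''
    have h1 : b j + 1 ≤ ext b j.val + 1 := by rw [ext_lt b j.isLt, Fin.eta]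
    exact h1.trans (le_sup (f := fun m => ext b m + 1) (mem_range.2 hj'))
  · refine Finset.sup_le fun m hm => ?_
    have hm' : m < i.val := mem_range.1 hm
    have hml : m < l := by omega
    rw [ext_lt b hml]
    exact le_sup (f := fun j => b j + 1) (Finset.mem_Iio.2 (Fin.lt_def.2 (by simpa using hm')))

def toB (a : Fin (l+1) → ℕ) : Fin l → ℕ :=
  fun i => if a i.succ < a i.castSucc then a i.succ else a i.succ - 1

def toA (b : Fin l → ℕ) : Fin (l+1) → ℕ := fun i => invA (ext b) i.val

lemma invA_toB {a : Fin (l+1) → ℕ} (ha : IsAWS l a) :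
    ∀ n < l + 1, invA (ext (toB a)) n = ext a n := by
  intro n
  induction n with
  | zero =>
    intro hn
    rw [ext_lt a hn]
    have h0 : (⟨0, hn⟩ : Fin (l+1)) = 0 := rfl
    rw [h0, ha.1]
    rfl
  | succ n ih =>
    intro hn
    have hnl : n < l := by omega
    have ihn := ih (by omega)
    set i : Fin l := ⟨n, hnl⟩ with hi
    have hcs : i.castSucc = (⟨n, by omega⟩ : Fin (l+1)) := rfl
    have hsc : i.succ = (⟨n+1, hn⟩ : Fin (l+1)) := rfl
    have hx : ext a n = a i.castSucc := by rw [ext_lt a (by omega : n < l+1), hcs]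
    have hy : ext a (n+1) = a i.succ := by rw [ext_lt a hn, hsc]
    have hbn : ext (toB a) n = toB a i := ext_lt (toB a) hnl
    have hne : a i.succ ≠ a i.castSucc := ha.2.1 i
    rw [invA_succ, hbn, ihn, hx, hy]
    unfold toB
    by_cases hlt : a i.succ < a i.castSucc
    · rw [if_pos hlt, if_pos hlt]
    · rw [if_neg hlt, if_neg (by omega : ¬ a i.succ - 1 < a i.castSucc)]
      omega

lemma isRGS_toB {a : Fin (l+1) → ℕ} (ha : IsAWS l a) : IsRGS l (toB a) := by
  intro i
  have key : (Finset.Iio i).sup (fun j => toB a j + 1) = (Finset.Iic i.castSucc).sup a := by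
    rw [sup_Iio, sup_Iic]
    have h1 : (range i.val).sup (fun m => ext (toB a) m + 1)
        = (range (i.val+1)).sup (invA (ext (toB a))) := (sup_invA _ _).symm
    rw [h1, Fin.coe_castSucc]
    exact Finset.sup_congr rfl (fun m hm => invA_toB ha m (by
      have := mem_range.1 hm; omega))
  rw [key]
  have hbase : a i.castSucc ≤ (Finset.Iic i.castSucc).sup a :=
    le_sup (Finset.mem_Iic.2 le_rfl)
  have hbound := ha.2.2 i
  unfold toB
  by_cases hlt : a i.succ < a i.castSucc
  · rw [if_pos hlt]; omega
  · rw [if_neg hlt]; omega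

lemma isAWS_toA {b : Fin l → ℕ} (hb : IsRGS l b) : IsAWS l (toA b) := by
  refine ⟨rfl, fun i => ?_, fun i => ?_⟩
  · have h1 : (i.succ : Fin (l+1)).val = i.val + 1 := Fin.val_succ i
    have h2 : (i.castSucc : Fin (l+1)).val = i.val := Fin.coe_castSucc i
    unfold toA
    rw [h1, h2]
    exact invA_succ_ne _ _
  · have h1 : (i.succ : Fin (l+1)).val = i.val + 1 := Fin.val_succ i
    unfold toA
    rw [h1]
    have key : (Finset.Iic i.castSucc).sup (fun j : Fin (l+1) => invA (ext b) j.val)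
        = (range i.val).sup (fun m => ext b m + 1) := by
      rw [sup_Iic, Fin.coe_castSucc, ← sup_invA]
      refine Finset.sup_congr rfl (fun m hm => ?_)
      have hm' : m < l + 1 := by have := mem_range.1 hm; omega
      exact ext_lt (fun j : Fin (l+1) => invA (ext b) j.val) hm'
    rw [key]
    have hsup : invA (ext b) i.val ≤ (range i.val).sup (fun m => ext b m + 1) := by
      rw [← sup_invA]
      exact le_sup (mem_range.2 (by omega))
    have hrgs : ext b i.val ≤ (range i.val).sup (fun m => ext b m + 1) := by
      rw [ext_lt b i.isLt, Fin.eta, ← sup_Iio]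
      exact hb i
    rw [invA_succ]
    split_ifs with h
    · omega
    · omega

lemma toB_toA (b : Fin l → ℕ) : toB (toA b) = b := by
  funext i
  unfold toB toA
  rw [Fin.val_succ, Fin.coe_castSucc, invA_succ]
  have hx : ext b i.val = b i := by rw [ext_lt b i.isLt, Fin.eta]
  split_ifs with h1 h2 h2 <;> omega

def equiv1 (l : ℕ) : {a : Fin (l+1) → ℕ // IsAWS l a} ≃ {b : Fin l → ℕ // IsRGS l b} where
  toFun a := ⟨toB a.1, isRGS_toB a.2⟩
  invFun b := ⟨toA b.1, isAWS_toA b.2⟩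
  left_inv a := by
    apply Subtype.ext
    funext i
    show invA (ext (toB a.1)) i.val = a.1 i
    rw [invA_toB a.2 i.val i.isLt, ext_lt a.1 i.isLt, Fin.eta]
  right_inv b := Subtype.ext (toB_toA b.1)

end Part2

section Part3
open Finset
open scoped Classical
variable {l : ℕ}

noncomputable def repc (s : Setoid (Fin l)) (i : Fin l) : Fin l :=
  (Finset.univ.filter (fun j => s j i)).min'
    ⟨i, Finset.mem_filter.2 ⟨Finset.mem_univ i, s.refl i⟩⟩

lemma repc_rel (s : Setoid (Fin l)) (i : Fin l) : s (repc s i) i := by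
  have := Finset.min'_mem (Finset.univ.filter (fun j => s j i))
    ⟨i, Finset.mem_filter.2 ⟨Finset.mem_univ i, s.refl i⟩⟩
  exact (Finset.mem_filter.1 this).2

lemma repc_le (s : Setoid (Fin l)) (i : Fin l) : repc s i ≤ i :=
  Finset.min'_le (Finset.univ.filter (fun j => s j i)) i
    (Finset.mem_filter.2 ⟨Finset.mem_univ i, s.refl i⟩)

lemma repc_min (s : Setoid (Fin l)) {i k : Fin l} (h : s k i) : repc s i ≤ k :=
  Finset.min'_le (Finset.univ.filter (fun j => s j i)) k
    (Finset.mem_filter.2 ⟨Finset.mem_univ k, h⟩)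

lemma repc_eq_of_rel (s : Setoid (Fin l)) {i k : Fin l} (h : s i k) : repc s i = repc s k := by
  have hset : Finset.univ.filter (fun j => s j i) = Finset.univ.filter (fun j => s j k) := by
    ext j
    simp only [Finset.mem_filter, Finset.mem_univ, true_and]
    exact ⟨fun hj => s.trans hj h, fun hj => s.trans hj (s.symm h)⟩
  unfold repc
  simp only [hset]

lemma repc_idem (s : Setoid (Fin l)) (i : Fin l) : repc s (repc s i) = repc s i :=
  repc_eq_of_rel s (repc_rel s i)

lemma rel_iff_repc (s : Setoid (Fin l)) (i j : Fin l) : s i j ↔ repc s i = repc s j := by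
  constructor
  · exact repc_eq_of_rel s
  · intro h
    have h1 : s (repc s i) i := repc_rel s i
    have h2 : s (repc s j) j := repc_rel s j
    rw [h] at h1
    exact s.trans (s.symm h1) h2

noncomputable def rgsOf (s : Setoid (Fin l)) (i : Fin l) : ℕ :=
  (Finset.univ.filter (fun j => repc s j = j ∧ j < repc s i)).card

lemma rgsOf_strict (s : Setoid (Fin l)) {i j : Fin l} (h : repc s i < repc s j) :
    rgsOf s i < rgsOf s j := by
  apply Finset.card_lt_card
  constructor
  · intro k hk
    simp only [Finset.mem_filter, Finset.mem_univ, true_and] at hk ⊢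
    exact ⟨hk.1, lt_trans hk.2 h⟩
  · intro hsub
    have hmem : repc s i ∈ Finset.univ.filter (fun j' => repc s j' = j' ∧ j' < repc s j) := by
      simp only [Finset.mem_filter, Finset.mem_univ, true_and]
      exact ⟨repc_idem s i, h⟩
    have := hsub hmem
    simp only [Finset.mem_filter, Finset.mem_univ, true_and] at this
    exact lt_irrefl _ this.2

lemma rgsOf_eq_iff (s : Setoid (Fin l)) (i j : Fin l) :
    rgsOf s i = rgsOf s j ↔ repc s i = repc s j := by
  constructor
  · intro h
    rcases lt_trichotomy (repc s i) (repc s j) with hlt | heq | hgt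
    · exact absurd h (Nat.ne_of_lt (rgsOf_strict s hlt))
    · exact heq
    · exact absurd h.symm (Nat.ne_of_lt (rgsOf_strict s hgt))
  · intro h
    unfold rgsOf
    rw [h]

lemma isRGS_rgsOf (s : Setoid (Fin l)) : IsRGS l (rgsOf s) := by
  intro i
  set S := Finset.univ.filter (fun j => repc s j = j ∧ j < repc s i) with hS
  by_cases hne : S.Nonempty
  · set m := S.max' hne with hm
    have hmmem : m ∈ S := Finset.max'_mem S hne
    simp only [hS, Finset.mem_filter, Finset.mem_univ, true_and] at hmmem
    have hmi : m < i := lt_of_lt_of_le hmmem.2 (repc_le s i)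
    have hSm : Finset.univ.filter (fun j => repc s j = j ∧ j < repc s m) = S.erase m := by
      ext k
      simp only [hS, Finset.mem_erase, Finset.mem_filter, Finset.mem_univ, true_and]
      constructor
      · intro hk
        have hkm : k < m := by rw [hmmem.1] at hk; exact hk.2
        exact ⟨ne_of_lt hkm, hk.1, lt_trans hkm hmmem.2⟩
      · intro hk
        refine ⟨hk.2.1, ?_⟩
        rw [hmmem.1]
        have hkS : k ∈ S := by
          simp only [hS, Finset.mem_filter, Finset.mem_univ, true_and]
          exact hk.2
        exact lt_of_le_of_ne (Finset.le_max' S k hkS) hk.1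
    have hmemS : m ∈ S := Finset.max'_mem S hne
    have hcard : rgsOf s i = rgsOf s m + 1 := by
      unfold rgsOf
      rw [hSm, Finset.card_erase_of_mem hmemS, ← hS]
      have : 0 < S.card := Finset.card_pos.2 hne
      omega
    rw [hcard]
    exact le_sup (f := fun j => rgsOf s j + 1) (Finset.mem_Iio.2 hmi)
  · have : S = ∅ := Finset.not_nonempty_iff_eq_empty.1 hne
    show S.card ≤ _
    rw [this]
    simp

lemma ker_rgsOf (s : Setoid (Fin l)) : Setoid.ker (rgsOf s) = s := by
  apply Setoid.ext
  intro a b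
  rw [Setoid.ker_def, rgsOf_eq_iff, ← rel_iff_repc]

lemma exists_val {b : Fin l → ℕ} (hb : IsRGS l b) :
    ∀ i : Fin l, ∀ v, v < b i → ∃ j, j < i ∧ b j = v := by
  have H : ∀ n : ℕ, ∀ i : Fin l, i.val < n → ∀ v, v < b i → ∃ j, j < i ∧ b j = v := by
    intro n
    induction n with
    | zero => intro i hi; omega
    | succ n ih =>
      intro i hi v hv
      have h1 : v < (Finset.Iio i).sup (fun j => b j + 1) := lt_of_lt_of_le hv (hb i)
      obtain ⟨j, hj, hvj⟩ := Finset.lt_sup_iff.1 h1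
      have hji : j < i := Finset.mem_Iio.1 hj
      rcases eq_or_lt_of_le (by omega : v ≤ b j) with heq | hlt
      · exact ⟨j, hji, heq.symm⟩
      · obtain ⟨k, hk, hbk⟩ := ih j (by have := Fin.lt_def.1 hji; omega) v hlt
        exact ⟨k, lt_trans hk hji, hbk⟩
  exact fun i => H (i.val + 1) i (by omega)

lemma rgsOf_ker {b : Fin l → ℕ} (hb : IsRGS l b) (i : Fin l) :
    rgsOf (Setoid.ker b) i = b i := by
  set t := Setoid.ker b with ht
  have hker : ∀ x y : Fin l, t x y ↔ b x = b y := fun x y => Setoid.ker_def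
  have hbrep : ∀ k : Fin l, b (repc t k) = b k := fun k => (hker _ _).1 (repc_rel t k)
  have key : (Finset.univ.filter (fun j => repc t j = j ∧ j < repc t i)).card
      = (Finset.range (b i)).card := by
    apply Finset.card_bij (fun j _ => b j)
    · intro j hj
      simp only [Finset.mem_filter, Finset.mem_univ, true_and] at hj
      rw [Finset.mem_range]
      rcases lt_trichotomy (b j) (b i) with h | h | h
      · exact h
      · exfalso
        have : repc t j = repc t i := repc_eq_of_rel t ((hker _ _).2 h)
        rw [hj.1] at this
        rw [this] at hj
        exact lt_irrefl _ hj.2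
      · exfalso
        obtain ⟨k, hk, hbk⟩ := exists_val hb j (b i) h
        have : repc t i ≤ k := repc_min t ((hker _ _).2 hbk)
        exact absurd (lt_trans (lt_of_le_of_lt this hk) hj.2) (lt_irrefl _)
    · intro j1 hj1 j2 hj2 hbj
      simp only [Finset.mem_filter, Finset.mem_univ, true_and] at hj1 hj2
      have : repc t j1 = repc t j2 := repc_eq_of_rel t ((hker _ _).2 hbj)
      rw [hj1.1, hj2.1] at this
      exact this
    · intro v hv
      rw [Finset.mem_range] at hv
      have hv' : v < b (repc t i) := by rw [hbrep]; exact hv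
      obtain ⟨k, hk, hbk⟩ := exists_val hb (repc t i) v hv'
      refine ⟨repc t k, ?_, ?_⟩
      · simp only [Finset.mem_filter, Finset.mem_univ, true_and]
        exact ⟨repc_idem t k, lt_of_le_of_lt (repc_le t k) hk⟩
      · rw [hbrep, hbk]
  unfold rgsOf
  rw [key, Finset.card_range]

noncomputable def equiv2 (l : ℕ) : {b : Fin l → ℕ // IsRGS l b} ≃ Setoid (Fin l) where
  toFun b := Setoid.ker b.1
  invFun s := ⟨rgsOf s, isRGS_rgsOf s⟩
  left_inv b := Subtype.ext (funext fun i => rgsOf_ker b.2 i)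
  right_inv s := ker_rgsOf s

end Part3

end AWSBell

/-- The number of anonymous walk sequences of length `l` equals the `l`-th Bell number,
i.e. the number of equivalence relations on `Fin l`. -/
theorem aw_count_eq_bell (l : ℕ) (hl : 0 < l) :
    Nat.card {a : Fin (l + 1) → ℕ // IsAWS l a} = Nat.card (Setoid (Fin l)) := by
  exact Nat.card_congr ((AWSBell.equiv1 l).trans (AWSBell.equiv2 l))
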